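/- Let Q : F_{2^n} → F_2 be the quadratic form Q(x) = Σ_{0 ≤ i < j < n} x^{2^i + 2^j}. Then the associated bilinear form B_Q(x,y) = Q(x) + Q(y) + Q(x+y) satisfies B_Q(x,y) = Tr(xy) + Tr(x)Tr(y) for all x, y ∈ F_{2^n}. -/

import Mathlib

noncomputable section

abbrev K (n : ℕ) := GaloisField 2 n

noncomputable instance (n : ℕ) : Fintype (K n) := Fintype.ofFinite _

/-- The absolute trace of `F_{2^n}` to `F_2`. -/
def tr (n : ℕ) : K n →ₗ[ZMod 2] ZMod 2 := Algebra.trace (ZMod 2) (K n)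

/-- The additive character `x ↦ (-1)^{Tr(x)}`. -/
def chi (n : ℕ) (x : K n) : ℤ := (-1) ^ (tr n x).val

/-- The Kloosterman sum. -/
def Kl (n : ℕ) (a : K n) : ℤ := ∑ x : K n, chi n (x⁻¹ + a * x)

/-- The Walsh transform of `F`. -/
def W (n : ℕ) (F : K n → K n) (a b : K n) : ℤ := ∑ x : K n, chi n (a * F x + b * x)

/-- The quadratic form `Q(x) = ∑_{0 ≤ i < j < n} x^{2^i + 2^j}`. -/
def Qf (n : ℕ) (x : K n) : K n := ∑ i ∈ Finset.range n, ∑ j ∈ Finset.Ioo i n, x ^ (2^i + 2^j)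

/-- Frobenius as an algebra automorphism of `K n`. -/
def frobAlg (n : ℕ) : K n ≃ₐ[ZMod 2] K n :=
  AlgEquiv.ofBijective
    { toRingHom := frobenius (K n) 2
      commutes' := fun r => by
        show frobenius (K n) 2 (algebraMap (ZMod 2) (K n) r) = algebraMap (ZMod 2) (K n) r
        rw [frobenius_def, ← map_pow, ZMod.pow_card] }
    ((Finite.injective_iff_bijective).mp (frobenius (K n) 2).injective)

lemma frobAlg_pow_apply (n : ℕ) (i : ℕ) (z : K n) : ((frobAlg n) ^ i) z = z ^ 2 ^ i := by
  induction i with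
  | zero => simp
  | succ i ih =>
    rw [pow_succ', AlgEquiv.mul_apply, ih]
    show frobenius (K n) 2 (z ^ 2 ^ i) = _
    rw [frobenius_def, ← pow_mul, ← pow_succ]

lemma frobAlg_pow_injOn (n : ℕ) (hn : n ≠ 0) :
    ∀ i < n, ∀ j < n, (frobAlg n) ^ i = (frobAlg n) ^ j → i = j := by
  classical
  have hcard : Fintype.card (K n) = 2 ^ n := by
    rw [← Nat.card_eq_fintype_card, GaloisField.card 2 n hn]
  -- key: if frobAlg^m = 1 with 0 < m < n then contradiction
  have key : ∀ m, 0 < m → m < n → (frobAlg n) ^ m ≠ 1 := by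
    intro m hm hmn h1
    obtain ⟨g, hg⟩ := IsCyclic.exists_generator (α := (K n)ˣ)
    have hog : orderOf g = 2 ^ n - 1 := by
      rw [orderOf_eq_card_of_forall_mem_zpowers hg, Nat.card_eq_fintype_card, Fintype.card_units, hcard]
    have hz : ((g : K n)) ^ 2 ^ m = (g : K n) := by
      have := congrArg (fun e : K n ≃ₐ[ZMod 2] K n => e (g : K n)) h1
      simpa [frobAlg_pow_apply] using this
    have hu : g ^ 2 ^ m = g := Units.ext (by rw [Units.val_pow_eq_pow_val]; exact hz)
    have hpow : g ^ (2 ^ m - 1) = 1 := by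
      have h2 : 2 ^ m = (2 ^ m - 1) + 1 := by
        have : 1 ≤ 2 ^ m := Nat.one_le_two_pow
        omega
      have := hu
      rw [h2, pow_succ] at this
      exact mul_right_cancel (by rwa [one_mul])
    have hdvd : orderOf g ∣ 2 ^ m - 1 := orderOf_dvd_of_pow_eq_one hpow
    rw [hog] at hdvd
    have hle : 2 ^ n - 1 ≤ 2 ^ m - 1 :=
      Nat.le_of_dvd (by have := Nat.one_lt_two_pow_iff.mpr (by omega : m ≠ 0); omega) hdvd
    have : 2 ^ n ≤ 2 ^ m := by
      have h1 : 1 ≤ 2 ^ m := Nat.one_le_two_pow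
      have h2 : 1 ≤ 2 ^ n := Nat.one_le_two_pow
      omega
    have := Nat.pow_lt_pow_right (a := 2) (by norm_num) hmn
    omega
  intro i hi j hj hij
  by_contra hne
  rcases Nat.lt_or_ge i j with h | h
  · have : (frobAlg n) ^ (j - i) = 1 := by
      have : (frobAlg n) ^ (j - i) * (frobAlg n) ^ i = (frobAlg n) ^ i := by
        rw [← pow_add]; rw [Nat.sub_add_cancel h.le, hij]
      exact mul_right_cancel (by rwa [one_mul])
    exact key (j - i) (by omega) (by omega) this
  · have h' : j < i := by omega
    have : (frobAlg n) ^ (i - j) = 1 := by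
      have : (frobAlg n) ^ (i - j) * (frobAlg n) ^ j = (frobAlg n) ^ j := by
        rw [← pow_add]; rw [Nat.sub_add_cancel h'.le, hij.symm]
      exact mul_right_cancel (by rwa [one_mul])
    exact key (i - j) (by omega) (by omega) this

lemma trace_formula (n : ℕ) (hn : n ≠ 0) (z : K n) :
    algebraMap (ZMod 2) (K n) (tr n z) = ∑ i ∈ Finset.range n, z ^ 2 ^ i := by
  classical
  rw [tr]
  rw [trace_eq_sum_automorphisms]
  have himg : (Finset.range n).image (fun i => (frobAlg n) ^ i) = Finset.univ := by
    apply Finset.eq_univ_of_card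
    rw [Finset.card_image_of_injOn, Finset.card_range]
    · rw [← Nat.card_eq_fintype_card, IsGalois.card_aut_eq_finrank, GaloisField.finrank 2 hn]
    · intro i hi j hj h
      exact frobAlg_pow_injOn n hn i (Finset.mem_range.mp hi) j (Finset.mem_range.mp hj) h
  rw [← himg, Finset.sum_image (fun i hi j hj h =>
    frobAlg_pow_injOn n hn i (Finset.mem_range.mp hi) j (Finset.mem_range.mp hj) h)]
  exact Finset.sum_congr rfl fun i _ => frobAlg_pow_apply n i z

theorem stmt6 {n : ℕ} (x y : K n) :
    Qf n x + Qf n y + Qf n (x + y) =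
      algebraMap (ZMod 2) (K n) (tr n (x * y) + tr n x * tr n y) := by
  have h2 : (2 : K n) = 0 := by
    have := CharP.cast_eq_zero (K n) 2; exact_mod_cast this
  rcases eq_or_ne n 0 with rfl | hn
  · -- n = 0 : everything degenerates
    have hsurj : ∀ z : K 0, ∃ c : ZMod 2, algebraMap (ZMod 2) (K 0) c = z := by
      have hsf : Polynomial.IsSplittingField (ZMod 2) (K 0) (Polynomial.X ^ 2 ^ 0 - Polynomial.X) :=
        Polynomial.IsSplittingField.splittingField _
      have hadj := hsf.adjoin_rootSet
      have hzero : (Polynomial.X ^ 2 ^ 0 - Polynomial.X : Polynomial (ZMod 2)) = 0 := by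
        simp
      rw [hzero, Polynomial.rootSet_zero, Algebra.adjoin_empty] at hadj
      intro z
      have : z ∈ (⊥ : Subalgebra (ZMod 2) (K 0)) := hadj ▸ Algebra.mem_top
      exact Algebra.mem_bot.mp this
    obtain ⟨c, hc⟩ := hsurj x
    obtain ⟨d, hd⟩ := hsurj y
    have hQ : ∀ z : K 0, Qf 0 z = 0 := by intro z; simp [Qf]
    rw [hQ, hQ, hQ, ← hc, ← hd, ← map_mul]
    have htr : ∀ c : ZMod 2, tr 0 (algebraMap (ZMod 2) (K 0) c) =
        (Module.finrank (ZMod 2) (K 0) : ZMod 2) * c := by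
      intro c
      rw [tr]
      show Algebra.trace (ZMod 2) (K 0) _ = _
      rw [Algebra.trace_algebraMap, nsmul_eq_mul]
    rw [htr, htr, htr]
    set m : ZMod 2 := (Module.finrank (ZMod 2) (K 0) : ZMod 2)
    have hm : m * m = m := by
      have : ∀ a : ZMod 2, a * a = a := by decide
      exact this m
    have : m * (c * d) + m * c * (m * d) = 0 := by
      have expand : m * c * (m * d) = (m * m) * (c * d) := by ring
      rw [expand, hm]
      have : ∀ a : ZMod 2, a + a = 0 := by decide
      exact this _
    rw [this, map_zero, add_zero, add_zero]
  · -- main case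
    have key : ∀ i j : ℕ, x ^ (2^i + 2^j) + y ^ (2^i + 2^j) + (x + y) ^ (2^i + 2^j)
        = x ^ 2^i * y ^ 2^j + x ^ 2^j * y ^ 2^i := by
      intro i j
      rw [pow_add, pow_add, pow_add, add_pow_char_pow, add_pow_char_pow]
      linear_combination (x ^ 2^i * x ^ 2^j + y ^ 2^i * y ^ 2^j) * h2
    have hLHS : Qf n x + Qf n y + Qf n (x + y) =
        ∑ i ∈ Finset.range n, ∑ j ∈ Finset.Ioo i n,
          (x ^ 2^i * y ^ 2^j + x ^ 2^j * y ^ 2^i) := by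
      rw [Qf, Qf, Qf, ← Finset.sum_add_distrib, ← Finset.sum_add_distrib]
      refine Finset.sum_congr rfl fun i _ => ?_
      rw [← Finset.sum_add_distrib, ← Finset.sum_add_distrib]
      exact Finset.sum_congr rfl fun j _ => key i j
    rw [hLHS, map_add (algebraMap (ZMod 2) (K n)), map_mul (algebraMap (ZMod 2) (K n)),
      trace_formula n hn, trace_formula n hn, trace_formula n hn, Finset.sum_mul_sum]
    -- now pure big-operator algebra
    have hdiag : ∑ i ∈ Finset.range n, (x * y) ^ 2 ^ i
        = ∑ i ∈ Finset.range n, x ^ 2^i * y ^ 2^i := by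
      exact Finset.sum_congr rfl fun i _ => mul_pow x y (2 ^ i)
    rw [hdiag]
    -- split double sum
    have hsplit : ∑ i ∈ Finset.range n, ∑ j ∈ Finset.range n, x ^ 2^i * y ^ 2^j
        = ∑ i ∈ Finset.range n, x ^ 2^i * y ^ 2^i
          + ∑ i ∈ Finset.range n, ∑ j ∈ Finset.Ioo i n,
              (x ^ 2^i * y ^ 2^j + x ^ 2^j * y ^ 2^i) := by
      have hswap : ∑ i ∈ Finset.range n, ∑ j ∈ Finset.Ioo i n, x ^ 2^j * y ^ 2^i
          = ∑ i ∈ Finset.range n, ∑ j ∈ Finset.range i, x ^ 2^i * y ^ 2^j := by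
        have h := Finset.sum_Ico_Ico_comm' 0 n (fun i j => x ^ 2^j * y ^ 2^i)
        simp only [Nat.Ico_zero_eq_range, Finset.Ico_add_one_left_eq_Ioo] at h
        exact h
      simp only [Finset.sum_add_distrib, hswap]
      rw [← Finset.sum_add_distrib, ← Finset.sum_add_distrib]
      refine Finset.sum_congr rfl fun i hi => ?_
      have hi' : i < n := Finset.mem_range.mp hi
      have hdecomp : ∑ j ∈ Finset.range n, x ^ 2^i * y ^ 2^j
          = ∑ j ∈ Finset.range (i+1), x ^ 2^i * y ^ 2^j
            + ∑ j ∈ Finset.Ioo i n, x ^ 2^i * y ^ 2^j := by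
        rw [Finset.range_eq_Ico, ← Finset.Ico_add_one_left_eq_Ioo,
          ← Finset.sum_Ico_consecutive _ (Nat.zero_le (i+1)) hi', Finset.range_eq_Ico]
      rw [hdecomp, Finset.sum_range_succ]
      ring
    rw [hsplit]
    have hDD : ∀ a b : K n, a + (a + b) = b := by
      intro a b
      rw [← add_assoc]
      have : a + a = 0 := by
        have := CharTwo.add_self_eq_zero (R := K n) a
        exact this
      rw [this, zero_add]
    rw [hDD]
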